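/- Let Ω be an unbounded domain in ℂⁿ. If there exists a bounded holomorphic function f on Ω which never takes the value zero and satisfies f(z) → 0 as ‖z‖ → ∞, then Ω is Kobayashi hyperbolic. -/

import Mathlib

open Metric Set

noncomputable def kob {E : Type*} [NormedAddCommGroup E] [NormedSpace ℂ E]
    (Ω : Set E) (z v : E) : ℝ :=
  sInf {c : ℝ | ∃ r : ℝ, 0 < r ∧ c = 1 / r ∧ ∃ f : ℂ → E,
    DifferentiableOn ℂ f (ball (0 : ℂ) r) ∧ f 0 = z ∧ deriv f 0 = v ∧
    MapsTo f (ball (0 : ℂ) r) Ω}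

/-- A set `Ω` is Kobayashi hyperbolic if around every point the Kobayashi
pseudometric admits a positive lower bound comparable to the norm. -/
def KobayashiHyperbolic {E : Type*} [NormedAddCommGroup E] [NormedSpace ℂ E]
    (Ω : Set E) : Prop :=
  ∀ p ∈ Ω, ∃ U ∈ nhds p, ∃ c > 0, ∀ q ∈ U ∩ Ω, ∀ v : E, c * ‖v‖ ≤ kob Ω q v

/-- Sub-mean value inequality on all closed disks contained in `S`. -/
def SubmeanOn (u : ℂ → ℝ) (S : Set ℂ) : Prop :=
  ∀ c : ℂ, ∀ s : ℝ, 0 < s → closedBall c s ⊆ S →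
    u c ≤ (2 * Real.pi)⁻¹ *
      ∫ θ in (0 : ℝ)..(2 * Real.pi), u (c + (s : ℂ) * Complex.exp ((θ : ℂ) * Complex.I))

def SubharmonicOn (u : ℂ → ℝ) (S : Set ℂ) : Prop :=
  UpperSemicontinuousOn u S ∧ SubmeanOn u S

/-- Plurisubharmonic: upper semicontinuous and subharmonic on every complex line. -/
def PSHOn {E : Type*} [NormedAddCommGroup E] [NormedSpace ℂ E]
    (u : E → ℝ) (Ω : Set E) : Prop :=
  UpperSemicontinuousOn u Ω ∧
    ∀ a b : E, SubmeanOn (fun lam : ℂ => u (a + lam • b)) {lam : ℂ | a + lam • b ∈ Ω}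


/-- On a disk slightly smaller than the disk of holomorphy, every holomorphic
function has a primitive (constructed via power series). -/
lemma exists_primitive {F : ℂ → ℂ} {R ρ : ℝ} (hρ : 0 < ρ) (hρR : ρ < R)
    (hF : DifferentiableOn ℂ F (ball (0 : ℂ) R)) :
    ∃ φ : ℂ → ℂ, φ 0 = 0 ∧ ∀ z ∈ ball (0 : ℂ) ρ, HasDerivAt φ (F z) z := by
  set r₁ : ℝ := (ρ + R) / 2 with hr₁def
  have hρr₁ : ρ < r₁ := by simp only [hr₁def]; linarith
  have hr₁R : r₁ < R := by simp only [hr₁def]; linarith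
  have hr₁pos : 0 < r₁ := lt_trans hρ hρr₁
  have hsub : closedBall (0 : ℂ) (r₁.toNNReal : ℝ) ⊆ ball (0 : ℂ) R := by
    rw [Real.coe_toNNReal _ hr₁pos.le]
    exact closedBall_subset_ball hr₁R
  have hps : HasFPowerSeriesOnBall F (cauchyPowerSeries F 0 r₁.toNNReal) 0 r₁.toNNReal :=
    (hF.mono hsub).hasFPowerSeriesOnBall (by simpa using hr₁pos)
  set p := cauchyPowerSeries F 0 r₁.toNNReal with hpdef
  have hrad : (ρ.toNNReal : ENNReal) < p.radius := by
    refine lt_of_lt_of_le ?_ hps.r_le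
    rw [ENNReal.coe_lt_coe]
    exact (Real.toNNReal_lt_toNNReal_iff hr₁pos).2 hρr₁
  have hsum : Summable fun n => ‖p n‖ * ρ ^ n := by
    have := p.summable_norm_mul_pow hrad
    simpa [Real.coe_toNNReal _ hρ.le] using this
  set g : ℕ → ℂ → ℂ := fun n z => (((n : ℂ) + 1)⁻¹ * p.coeff n) * z ^ (n + 1) with hgdef
  set g' : ℕ → ℂ → ℂ := fun n z => p.coeff n * z ^ n with hg'def
  have hgderiv : ∀ n z, HasDerivAt (g n) (g' n z) z := by
    intro n z
    have h1 : HasDerivAt (fun z : ℂ => z ^ (n + 1)) (((n : ℂ) + 1) * z ^ n) z := by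
      simpa using hasDerivAt_pow (n + 1) z
    have := h1.const_mul (((n : ℂ) + 1)⁻¹ * p.coeff n)
    refine this.congr_deriv ?_
    have hne : ((n : ℂ) + 1) ≠ 0 := Nat.cast_add_one_ne_zero n
    simp only [hg'def]
    field_simp
  have hbound : ∀ n z, z ∈ ball (0 : ℂ) ρ → ‖g' n z‖ ≤ ‖p n‖ * ρ ^ n := by
    intro n z hz
    rw [mem_ball_zero_iff] at hz
    have : ‖g' n z‖ = ‖p.coeff n‖ * ‖z‖ ^ n := by
      simp [hg'def, norm_mul, norm_pow]
    rw [this, p.norm_apply_eq_norm_coef]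
    exact mul_le_mul_of_nonneg_left (pow_le_pow_left₀ (norm_nonneg _) hz.le n) (norm_nonneg _)
  have hsum0 : Summable fun n => g n 0 := by
    simpa [hgdef] using summable_zero
  refine ⟨fun z => ∑' n, g n z, ?_, ?_⟩
  · simp [hgdef]
  · intro z hz
    have hkey : HasDerivAt (fun w => ∑' n, g n w) (∑' n, g' n z) z :=
      hasDerivAt_tsum_of_isPreconnected hsum isOpen_ball
        (convex_ball (0 : ℂ) ρ).isPreconnected (fun n y _ => hgderiv n y) hbound
        (mem_ball_self hρ) hsum0 hz
    have hz' : z ∈ Metric.eball (0 : ℂ) (r₁.toNNReal : ENNReal) := by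
      rw [mem_ball_zero_iff] at hz
      rw [Metric.mem_eball, edist_zero_right]
      have : (‖z‖₊ : ENNReal) < (r₁.toNNReal : ENNReal) := by
        rw [ENNReal.coe_lt_coe, ← NNReal.coe_lt_coe, coe_nnnorm,
          Real.coe_toNNReal _ hr₁pos.le]
        exact hz.trans hρr₁
      exact this
    have hhs : HasSum (fun n => g' n z) (F z) := by
      have := hps.hasSum hz'
      simp only [zero_add] at this
      have hfun : (fun n => g' n z) = fun n => (p n) fun _ => z := by
        funext n
        rw [p.apply_eq_pow_smul_coeff, smul_eq_mul, hg'def]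
        ring
      rw [hfun]; exact this
    rwa [hhs.tsum_eq] at hkey

lemma exists_log {h : ℂ → ℂ} {R ρ : ℝ} (hρ : 0 < ρ) (hρR : ρ < R)
    (hd : DifferentiableOn ℂ h (ball (0 : ℂ) R))
    (hne : ∀ z ∈ ball (0 : ℂ) R, h z ≠ 0) :
    ∃ φ : ℂ → ℂ, (∀ z ∈ ball (0 : ℂ) ρ, HasDerivAt φ (deriv h z / h z) z) ∧
      ∀ z ∈ ball (0 : ℂ) ρ, Complex.exp (φ z) = h z := by
  have hRpos : 0 < R := lt_trans hρ hρR
  have h0 : h 0 ≠ 0 := hne 0 (mem_ball_self hRpos)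
  have hderiv : DifferentiableOn ℂ (deriv h) (ball (0 : ℂ) R) :=
    ((hd.analyticOnNhd isOpen_ball).deriv).differentiableOn
  have hF : DifferentiableOn ℂ (fun z => deriv h z / h z) (ball (0 : ℂ) R) :=
    hderiv.div hd hne
  obtain ⟨φ₀, hφ₀0, hφ₀⟩ := exists_primitive hρ hρR hF
  set φ : ℂ → ℂ := fun z => Complex.log (h 0) + φ₀ z with hφdef
  have hφD : ∀ z ∈ ball (0 : ℂ) ρ, HasDerivAt φ (deriv h z / h z) z := by
    intro z hz
    exact (hφ₀ z hz).const_add _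
  refine ⟨φ, hφD, ?_⟩
  have hsub : ball (0 : ℂ) ρ ⊆ ball (0 : ℂ) R := ball_subset_ball hρR.le
  set G : ℂ → ℂ := fun z => h z * Complex.exp (-φ z) with hGdef
  have hG : ∀ z ∈ ball (0 : ℂ) ρ, HasDerivAt G 0 z := by
    intro z hz
    have hh : HasDerivAt h (deriv h z) z :=
      (hd.differentiableAt (isOpen_ball.mem_nhds (hsub hz))).hasDerivAt
    have he : HasDerivAt (fun w => Complex.exp (-φ w))
        (Complex.exp (-φ z) * -(deriv h z / h z)) z := ((hφD z hz).neg).cexp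
    have := hh.mul he
    refine this.congr_deriv ?_
    have hz' : h z ≠ 0 := hne z (hsub hz)
    have hc : h z * (deriv h z / h z) = deriv h z := mul_div_cancel₀ _ hz'
    linear_combination (-Complex.exp (-φ z)) * hc
  -- G is constant on the ball
  have hGdiff : DifferentiableOn ℂ G (ball (0 : ℂ) ρ) :=
    fun z hz => ((hG z hz).differentiableAt).differentiableWithinAt
  have hGconst : ∀ z ∈ ball (0 : ℂ) ρ, G z = G 0 := by
    intro z hz
    refine (convex_ball (0 : ℂ) ρ).is_const_of_fderivWithin_eq_zero hGdiff ?_ hz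
      (mem_ball_self hρ)
    intro w hw
    have h1 : fderiv ℂ G w = 0 := by
      rw [(hG w hw).hasFDerivAt.fderiv]
      ext
      simp
    rw [fderivWithin_of_isOpen isOpen_ball hw, h1]
  have hG0 : G 0 = 1 := by
    simp only [hGdef, hφdef, hφ₀0, add_zero, ← Complex.exp_neg]
    rw [Complex.exp_neg, Complex.exp_log h0, mul_inv_cancel₀ h0]
  intro z hz
  have := hGconst z hz
  rw [hG0, hGdef] at this
  simp only [Complex.exp_neg] at this
  field_simp at this
  exact this.symm

/-- Harnack-type estimate: a holomorphic function on a disk with negative real part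
satisfies `Re φ(z) ≥ 3 Re φ(0)` on the half-radius disk. -/
lemma harnack_half {φ : ℂ → ℂ} {ρ : ℝ} (hρ : 0 < ρ)
    (hd : DifferentiableOn ℂ φ (ball (0 : ℂ) ρ))
    (hneg : ∀ z ∈ ball (0 : ℂ) ρ, (φ z).re < 0) :
    ∀ z ∈ ball (0 : ℂ) (ρ / 2), 3 * (φ 0).re ≤ (φ z).re := by
  set w₀ : ℂ := φ 0 with hw₀
  have hx₀ : w₀.re < 0 := hneg 0 (mem_ball_self hρ)
  have hdenne : ∀ z ∈ ball (0 : ℂ) ρ, φ z + (starRingEnd ℂ) w₀ ≠ 0 := by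
    intro z hz hc
    have : (φ z + (starRingEnd ℂ) w₀).re < 0 := by
      simp only [Complex.add_re, Complex.conj_re]
      linarith [hneg z hz]
    rw [hc] at this
    simp at this
  set ψ : ℂ → ℂ := fun z => (φ z - w₀) / (φ z + (starRingEnd ℂ) w₀) with hψ
  have hψd : DifferentiableOn ℂ ψ (ball (0 : ℂ) ρ) :=
    (hd.sub (differentiableOn_const _)).div (hd.add (differentiableOn_const _)) hdenne
  have hψ0 : ψ 0 = 0 := by simp [hψ, hw₀]
  have hlt : ∀ z ∈ ball (0 : ℂ) ρ,
      Complex.normSq (φ z - w₀) < Complex.normSq (φ z + (starRingEnd ℂ) w₀) := by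
    intro z hz
    have hx : (φ z).re < 0 := hneg z hz
    simp only [Complex.normSq_apply, Complex.sub_re, Complex.sub_im, Complex.add_re,
      Complex.add_im, Complex.conj_re, Complex.conj_im]
    nlinarith [mul_pos (neg_pos.2 hx) (neg_pos.2 hx₀)]
  have hmaps : MapsTo ψ (ball (0 : ℂ) ρ) (ball (ψ 0) 1) := by
    intro z hz
    rw [hψ0, mem_ball_zero_iff]
    have h1 : ‖φ z - w₀‖ < ‖φ z + (starRingEnd ℂ) w₀‖ := by
      rw [Complex.norm_def, Complex.norm_def]
      exact Real.sqrt_lt_sqrt (Complex.normSq_nonneg _) (hlt z hz)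
    have h2 : 0 < ‖φ z + (starRingEnd ℂ) w₀‖ :=
      (norm_pos_iff.2 (hdenne z hz))
    simp only [hψ, norm_div]
    rw [div_lt_one h2]
    exact h1
  intro z hz
  have hzρ : z ∈ ball (0 : ℂ) ρ := ball_subset_ball (by linarith) hz
  have hkey := Complex.dist_le_div_mul_dist_of_mapsTo_ball hψd (hmaps.mono_right ball_subset_closedBall) hzρ
  rw [hψ0, dist_zero_right, dist_zero_right] at hkey
  have hznorm : ‖z‖ < ρ / 2 := mem_ball_zero_iff.1 hz
  have hhalf : ‖ψ z‖ ≤ 1 / 2 := by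
    calc ‖ψ z‖ ≤ 1 / ρ * ‖z‖ := hkey
    _ ≤ 1 / ρ * (ρ / 2) := by
        exact mul_le_mul_of_nonneg_left hznorm.le (by positivity)
    _ = 1 / 2 := by field_simp
  -- from ‖num‖ ≤ (1/2)‖den‖, conclude
  have hden : 0 < ‖φ z + (starRingEnd ℂ) w₀‖ :=
    norm_pos_iff.2 (hdenne z hzρ)
  have hnumden : ‖φ z - w₀‖ ≤ 1 / 2 * ‖φ z + (starRingEnd ℂ) w₀‖ := by
    have := hhalf
    simp only [hψ, norm_div] at this
    rw [div_le_iff₀ hden] at this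
    linarith
  have hsq : Complex.normSq (φ z - w₀) ≤
      1 / 4 * Complex.normSq (φ z + (starRingEnd ℂ) w₀) := by
    have h1 := mul_self_le_mul_self (norm_nonneg _) hnumden
    rw [Complex.norm_mul_self_eq_normSq] at h1
    calc Complex.normSq (φ z - w₀) ≤
        (1 / 2 * ‖φ z + (starRingEnd ℂ) w₀‖) *
        (1 / 2 * ‖φ z + (starRingEnd ℂ) w₀‖) := h1
      _ = 1 / 4 * Complex.normSq (φ z + (starRingEnd ℂ) w₀) := by
          rw [← Complex.norm_mul_self_eq_normSq]; ring
  have hx : (φ z).re < 0 := hneg z hzρ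
  simp only [Complex.normSq_apply, Complex.sub_re, Complex.sub_im, Complex.add_re,
    Complex.add_im, Complex.conj_re, Complex.conj_im] at hsq
  nlinarith [sq_nonneg ((φ z).im - w₀.im), sq_nonneg ((φ z).re - 3 * w₀.re),
    mul_pos (neg_pos.2 hx) (neg_pos.2 hx₀)]

/-- If an unbounded domain in ℂⁿ carries a bounded nonvanishing holomorphic function
decaying to 0 at infinity, then it is Kobayashi hyperbolic. -/
theorem stmt_1 {n : ℕ} (Ω : Set (EuclideanSpace ℂ (Fin n)))
    (hopen : IsOpen Ω) (hconn : IsConnected Ω)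
    (hunbounded : ¬ Bornology.IsBounded Ω)
    (f : EuclideanSpace ℂ (Fin n) → ℂ)
    (hf : DifferentiableOn ℂ f Ω)
    (hbdd : ∃ M : ℝ, ∀ z ∈ Ω, ‖f z‖ ≤ M)
    (hne : ∀ z ∈ Ω, f z ≠ 0)
    (hdecay : ∀ ε > 0, ∃ R : ℝ, ∀ z ∈ Ω, R ≤ ‖z‖ → ‖f z‖ < ε) :
    KobayashiHyperbolic Ω := by
  obtain ⟨M, hM⟩ := hbdd
  intro p hp
  set a : ℝ := ‖f p‖ with hadef
  have ha : 0 < a := norm_pos_iff.2 (hne p hp)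
  set M' : ℝ := M + 1 with hM'def
  have hM'pos : 0 < M' := by
    have h0 : (0:ℝ) ≤ M := (norm_nonneg (f p)).trans (hM p hp)
    simp only [hM'def]; linarith
  have hM' : ∀ z ∈ Ω, ‖f z‖ < M' := fun z hz => lt_of_le_of_lt (hM z hz) (by simp [hM'def])
  set δ : ℝ := M' * (a / (2 * M')) ^ 3 with hδdef
  have hδ : 0 < δ := by positivity
  obtain ⟨R, hR⟩ := hdecay δ hδ
  set R₀ : ℝ := max R 1 with hR₀def
  have hR₀ : ∀ z ∈ Ω, R₀ ≤ ‖z‖ → ‖f z‖ < δ :=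
    fun z hz hle => hR z hz ((le_max_left _ _).trans hle)
  have hR₀pos : (0:ℝ) < R₀ := lt_of_lt_of_le one_pos (le_max_right _ _)
  set R₂ : ℝ := R₀ + ‖p‖ + 1 with hR₂def
  have hR₂pos : 0 < R₂ := by positivity
  have hcont : ContinuousAt f p := hf.continuousOn.continuousAt (hopen.mem_nhds hp)
  have h1 : {q | a / 2 < ‖f q‖} ∈ nhds p :=
    hcont.norm.eventually (eventually_gt_nhds (half_lt_self ha))
  obtain ⟨ρ, hρpos, hρsub⟩ := Metric.mem_nhds_iff.1
    (Filter.inter_mem (hopen.mem_nhds hp) (Filter.inter_mem h1 (Metric.ball_mem_nhds p one_pos)))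
  refine ⟨ball p ρ, ball_mem_nhds p hρpos, 1 / (4 * R₂), by positivity, ?_⟩
  rintro q ⟨hqU, hqΩ⟩ v
  have hfq : a / 2 < ‖f q‖ := (hρsub hqU).2.1
  have hq1 : ‖q‖ < ‖p‖ + 1 := by
    have hd : dist q p < 1 := mem_ball.1 (hρsub hqU).2.2
    calc ‖q‖ = ‖q - p + p‖ := by rw [sub_add_cancel]
      _ ≤ ‖q - p‖ + ‖p‖ := norm_add_le _ _
      _ < 1 + ‖p‖ := by rw [← dist_eq_norm] at *; linarith
      _ = ‖p‖ + 1 := by ring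
  by_cases hv : v = 0
  · rw [hv]
    simp only [norm_zero, mul_zero]
    exact Real.sInf_nonneg (fun b hb => by
      obtain ⟨r, hr, rfl, -⟩ := hb
      positivity)
  · unfold kob
    apply le_csInf
    · -- nonemptiness: a small affine disk fits in Ω
      obtain ⟨ε, hεpos, hεsub⟩ := Metric.isOpen_iff.1 hopen q hqΩ
      have hrpos : 0 < ε / (‖v‖ + 1) := by positivity
      refine ⟨1 / (ε / (‖v‖ + 1)), ε / (‖v‖ + 1), hrpos, rfl,
        fun lam => q + lam • v, ?_, by simp, ?_, ?_⟩
      · exact ((differentiable_id.smul_const v).const_add q).differentiableOn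
      · have hD : HasDerivAt (fun lam : ℂ => q + lam • v) v 0 := by
          simpa using ((hasDerivAt_id (0:ℂ)).smul_const v).const_add q
        exact hD.deriv
      · intro lam hlam
        apply hεsub
        rw [mem_ball_zero_iff] at hlam
        rw [mem_ball_iff_norm]
        have : ‖q + lam • v - q‖ = ‖lam‖ * ‖v‖ := by
          simp [norm_smul]
        rw [this]
        calc ‖lam‖ * ‖v‖ < ε / (‖v‖ + 1) * (‖v‖ + 1) := by
              apply mul_lt_mul' hlam.le (by linarith [norm_nonneg v]) (norm_nonneg v) hrpos
          _ = ε := by field_simp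
    · rintro b ⟨r, hr, rfl, g, hg, hg0, hgd, hgm⟩
      set h : ℂ → ℂ := f ∘ g with hhdef
      have hh : DifferentiableOn ℂ h (ball (0:ℂ) r) := hf.comp hg hgm
      have hhne : ∀ lam ∈ ball (0:ℂ) r, h lam ≠ 0 := fun lam hl => hne _ (hgm hl)
      obtain ⟨φ, hφd, hφe⟩ := exists_log (half_pos hr) (half_lt_self hr) hh hhne
      have hsub2 : ball (0:ℂ) (r/2) ⊆ ball (0:ℂ) r := ball_subset_ball (by linarith)
      have hre : ∀ lam ∈ ball (0:ℂ) (r/2), (φ lam).re = Real.log ‖h lam‖ := by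
        intro lam hl
        have he := hφe lam hl
        have h1 : ‖h lam‖ = Real.exp ((φ lam).re) := by
          rw [← he, Complex.norm_exp]
        rw [h1, Real.log_exp]
      set φt : ℂ → ℂ := fun lam => φ lam - (Real.log M' : ℂ) with hφtdef
      have hφtneg : ∀ lam ∈ ball (0:ℂ) (r/2), (φt lam).re < 0 := by
        intro lam hl
        have hpos : 0 < ‖h lam‖ := norm_pos_iff.2 (hhne lam (hsub2 hl))
        have hlt : ‖h lam‖ < M' := hM' _ (hgm (hsub2 hl))
        simp only [hφtdef, Complex.sub_re, Complex.ofReal_re, hre lam hl]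
        have := Real.log_lt_log hpos hlt
        linarith
      have hφtd : DifferentiableOn ℂ φt (ball (0:ℂ) (r/2)) := fun lam hl =>
        (((hφd lam hl).differentiableAt).sub_const _).differentiableWithinAt
      have hharn := harnack_half (half_pos hr) hφtd hφtneg
      have h0mem : (0:ℂ) ∈ ball (0:ℂ) (r/2) := mem_ball_self (half_pos hr)
      have hh0 : h 0 = f q := by rw [hhdef]; simp [hg0]
      have hh0pos : 0 < ‖h 0‖ := by rw [hh0]; exact lt_trans (by linarith) hfq
      -- lower bound for ‖h lam‖ on the quarter disk
      have hlow : ∀ lam ∈ ball (0:ℂ) (r/2/2), δ ≤ ‖h lam‖ := by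
        intro lam hl
        have hl2 : lam ∈ ball (0:ℂ) (r/2) := ball_subset_ball (by linarith) hl
        have hharn' := hharn lam hl
        set t : ℝ := ‖h 0‖ / M' with htdef
        have htpos : 0 < t := by positivity
        have hre0 : (φt 0).re = Real.log t := by
          simp only [hφtdef, Complex.sub_re, Complex.ofReal_re, hre 0 h0mem]
          rw [htdef, Real.log_div (ne_of_gt hh0pos) (ne_of_gt hM'pos)]
        have hrelam : (φt lam).re = Real.log (‖h lam‖ / M') := by
          have hpos : 0 < ‖h lam‖ := norm_pos_iff.2 (hhne lam (hsub2 hl2))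
          simp only [hφtdef, Complex.sub_re, Complex.ofReal_re, hre lam hl2]
          rw [Real.log_div (ne_of_gt hpos) (ne_of_gt hM'pos)]
        have hkey : Real.log (t ^ 3) ≤ Real.log (‖h lam‖ / M') := by
          rw [Real.log_pow]
          rw [hre0] at hharn'
          rw [hrelam] at hharn'
          push_cast
          linarith
        have hpos : 0 < ‖h lam‖ := norm_pos_iff.2 (hhne lam (hsub2 hl2))
        have h2 : t ^ 3 ≤ ‖h lam‖ / M' := by
          have := Real.exp_le_exp.2 hkey
          rwa [Real.exp_log (by positivity), Real.exp_log (by positivity)] at this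
        have h3 : (a / (2 * M')) ^ 3 ≤ t ^ 3 := by
          apply pow_le_pow_left₀ (by positivity)
          rw [htdef, hh0, show a / (2 * M') = (a / 2) / M' from (div_div a 2 M').symm]
          gcongr
        calc δ = M' * (a / (2 * M')) ^ 3 := by rw [hδdef]
          _ ≤ M' * (‖h lam‖ / M') := by
              apply mul_le_mul_of_nonneg_left (le_trans h3 h2) hM'pos.le
          _ = ‖h lam‖ := by field_simp
      have hgsmall : ∀ lam ∈ ball (0:ℂ) (r/2/2), ‖g lam‖ < R₀ := by
        intro lam hl
        by_contra hcon
        push_neg at hcon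
        have hmem : g lam ∈ Ω := hgm (hsub2 (ball_subset_ball (by linarith) hl))
        have := hR₀ (g lam) hmem hcon
        have hge := hlow lam hl
        rw [hhdef] at hge
        simp only [Function.comp_apply] at hge
        linarith
      have hmaps : MapsTo g (ball (0:ℂ) (r/2/2)) (ball (g 0) R₂) := by
        intro lam hl
        rw [mem_ball, dist_eq_norm]
        have h4 : ‖g lam‖ < R₀ := hgsmall lam hl
        have h5 : ‖g 0‖ < ‖p‖ + 1 := by rw [hg0]; exact hq1
        calc ‖g lam - g 0‖ ≤ ‖g lam‖ + ‖g 0‖ := norm_sub_le _ _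
          _ < R₀ + (‖p‖ + 1) := add_lt_add h4 h5
          _ = R₂ := by rw [hR₂def]; ring
      have hq4 : (0:ℝ) < r/2/2 := by linarith
      have hs := Complex.norm_deriv_le_div_of_mapsTo_ball
        (hg.mono (ball_subset_ball (by linarith))) (hmaps.mono_right ball_subset_closedBall) hq4
      rw [hgd] at hs
      have hvb : ‖v‖ ≤ 4 * R₂ / r := by
        have heq : R₂ / (r/2/2) = 4 * R₂ / r := by field_simp; ring
        rwa [heq] at hs
      have hfinal := mul_le_mul_of_nonneg_left hvb (le_of_lt (by positivity : (0:ℝ) < 1 / (4 * R₂)))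
      calc 1 / (4 * R₂) * ‖v‖ ≤ 1 / (4 * R₂) * (4 * R₂ / r) := hfinal
        _ = 1 / r := by field_simp
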